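/- Under the hypotheses of the magic property (T(t)=Θ'(t²)t strictly increasing), at every point x where u^ε is differentiable one has |Du^ε(x)| ≥ (1/ε) T(|x − x^ε|), where x^ε is the unique maximizing point in the flat sup-convolution at x. -/

import Mathlib

open Filter

/-- Gradient lower bound for flat sup-convolutions: at any differentiability point `x`
of `u^ε`, `|Du^ε(x)| ≥ (1/ε)·T(|x − x^ε|)` where `T(t) = Θ'(t²)t` and `x^ε` is a
maximizing point of the sup-convolution at `x`. -/
theorem flat_sup_convolution_gradient_lower_bound {n : ℕ}
    (Ω : Set (EuclideanSpace ℝ (Fin n)))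
    (hΩbd : Bornology.IsBounded Ω) (hΩne : Ω.Nonempty)
    (d : ℝ) (hd : d = Metric.diam Ω)
    (u : EuclideanSpace ℝ (Fin n) → ℝ)
    (hu : ContinuousOn u (closure Ω))
    (Θ : ℝ → ℝ)
    (hΘC2 : ContDiffOn ℝ 2 Θ (Set.Ioi 0))
    (hΘmono : StrictMonoOn Θ (Set.Ioi 0))
    (hΘ0 : Tendsto Θ (nhdsWithin 0 (Set.Ioi 0)) (nhds 0))
    (hΘ'0 : Tendsto (deriv Θ) (nhdsWithin 0 (Set.Ioi 0)) (nhds 0))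
    (hT : StrictMonoOn (fun t => deriv Θ (t^2) * t) (Set.Ioo 0 d))
    (ε : ℝ) (hε : 0 < ε)
    (uε : EuclideanSpace ℝ (Fin n) → ℝ)
    (huε : ∀ x, uε x = ⨆ y : Ω, (u y - Θ (‖x - (y : EuclideanSpace ℝ (Fin n))‖^2) / (2*ε)))
    (x : EuclideanSpace ℝ (Fin n)) (hx : x ∈ Ω)
    (xe : EuclideanSpace ℝ (Fin n)) (hxe : xe ∈ closure Ω)
    (hmax : uε x = u xe - Θ (‖x - xe‖^2) / (2*ε))
    (g : EuclideanSpace ℝ (Fin n)) (hg : HasGradientAt uε g x) :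
    (1/ε) * (deriv Θ (‖x - xe‖^2) * ‖x - xe‖) ≤ ‖g‖ := by
  rcases eq_or_lt_of_le (norm_nonneg (x - xe)) with h0 | hrpos
  · rw [← h0]
    simpa using norm_nonneg g
  set r : ℝ := ‖x - xe‖ with hr
  -- Θ is nonnegative on (0, ∞)
  have hΘnn : ∀ t : ℝ, 0 < t → 0 ≤ Θ t := by
    intro t ht
    refine le_of_tendsto hΘ0 ?_
    filter_upwards [Ioo_mem_nhdsGT_of_mem (show (0:ℝ) ∈ Set.Ico 0 t from ⟨le_refl 0, ht⟩)]
      with s hs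
    exact (hΘmono hs.1 ht hs.2).le
  -- a uniform upper bound for u on the closure
  have hK : IsCompact (closure Ω) :=
    Metric.isCompact_of_isClosed_isBounded isClosed_closure hΩbd.closure
  obtain ⟨M, hM⟩ : ∃ M, ∀ y ∈ closure Ω, u y ≤ M := by
    obtain ⟨M, hM⟩ := (hK.image_of_continuousOn hu).bddAbove
    exact ⟨M, fun y hy => hM (Set.mem_image_of_mem u hy)⟩
  have h2ε : (0:ℝ) < 2 * ε := by linarith
  -- the sup is bounded above
  have hbdd : ∀ z : EuclideanSpace ℝ (Fin n),
      BddAbove (Set.range fun y : Ω => u y - Θ (‖z - (y : EuclideanSpace ℝ (Fin n))‖^2) / (2*ε)) := by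
    intro z
    refine ⟨M + |Θ 0| / (2*ε), ?_⟩
    rintro w ⟨y, rfl⟩
    have hy : (y : EuclideanSpace ℝ (Fin n)) ∈ closure Ω := subset_closure y.2
    have h1 : u y ≤ M := hM y hy
    have h2 : -(Θ (‖z - (y : EuclideanSpace ℝ (Fin n))‖^2) / (2*ε)) ≤ |Θ 0| / (2*ε) := by
      rcases eq_or_lt_of_le (norm_nonneg (z - (y : EuclideanSpace ℝ (Fin n)))) with h | h
      · rw [← h]
        norm_num
        calc -(Θ 0 / (2*ε)) = (-(Θ 0))/(2*ε) := by ring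
          _ ≤ |Θ 0|/(2*ε) := by gcongr; exact neg_le_abs _
      · have hpos : (0:ℝ) < ‖z - (y : EuclideanSpace ℝ (Fin n))‖^2 := by positivity
        have := hΘnn _ hpos
        have hle : -(Θ (‖z - (y : EuclideanSpace ℝ (Fin n))‖^2) / (2*ε)) ≤ 0 := by
          rw [neg_nonpos]; positivity
        exact hle.trans (by positivity)
    linarith
  -- key inequality: the sup-convolution dominates the value tested at xe
  have hkey : ∀ z : EuclideanSpace ℝ (Fin n), z ≠ xe →
      u xe - Θ (‖z - xe‖^2) / (2*ε) ≤ uε z := by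
    intro z hz
    obtain ⟨yk, hykΩ, hyk⟩ := mem_closure_iff_seq_limit.mp hxe
    have hterm : ∀ k, u (yk k) - Θ (‖z - yk k‖^2) / (2*ε) ≤ uε z := by
      intro k
      rw [huε z]
      exact le_ciSup (hbdd z) ⟨yk k, hykΩ k⟩
    have hupos : Tendsto (fun k => u (yk k)) atTop (nhds (u xe)) := by
      have : Tendsto yk atTop (nhdsWithin xe (closure Ω)) :=
        tendsto_nhdsWithin_of_tendsto_nhds_of_eventually_within yk hyk
          (Eventually.of_forall fun k => subset_closure (hykΩ k))
      exact (hu.continuousWithinAt hxe).tendsto.comp this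
    have hnorm : Tendsto (fun k => ‖z - yk k‖^2) atTop (nhds (‖z - xe‖^2)) := by
      have : Continuous fun w : EuclideanSpace ℝ (Fin n) => ‖z - w‖^2 := by continuity
      exact (this.tendsto xe).comp hyk
    have hzpos : (0:ℝ) < ‖z - xe‖^2 := by
      have hne : z - xe ≠ 0 := sub_ne_zero.mpr hz
      exact pow_pos (norm_pos_iff.mpr hne) 2
    have hΘcont : ContinuousAt Θ (‖z - xe‖^2) :=
      (hΘC2.continuousOn.continuousAt (isOpen_Ioi.mem_nhds hzpos))
    have hΘt : Tendsto (fun k => Θ (‖z - yk k‖^2)) atTop (nhds (Θ (‖z - xe‖^2))) :=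
      hΘcont.tendsto.comp hnorm
    have : Tendsto (fun k => u (yk k) - Θ (‖z - yk k‖^2) / (2*ε)) atTop
        (nhds (u xe - Θ (‖z - xe‖^2) / (2*ε))) :=
      hupos.sub (hΘt.div_const _)
    exact le_of_tendsto this (Eventually.of_forall hterm)
  -- the direction
  set v : EuclideanSpace ℝ (Fin n) := r⁻¹ • (x - xe) with hv
  have hrne : r ≠ 0 := ne_of_gt hrpos
  have hvnorm : ‖v‖ = 1 := by
    rw [hv, norm_smul, norm_inv, Real.norm_eq_abs, abs_of_pos hrpos, ← hr,
      inv_mul_cancel₀ hrne]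
  -- geometry of points along the segment
  have hzsub : ∀ h : ℝ, (x - h • v) - xe = (1 - h / r) • (x - xe) := by
    intro h
    rw [hv, smul_smul, sub_smul, one_smul, div_eq_mul_inv]
    abel
  have hznorm : ∀ h : ℝ, h ∈ Set.Ioo 0 r → ‖(x - h • v) - xe‖ = r - h := by
    intro h hh
    rw [hzsub h, norm_smul, Real.norm_eq_abs, ← hr]
    have h1 : (0:ℝ) ≤ 1 - h / r := by
      rw [sub_nonneg]
      exact (div_le_one hrpos).mpr hh.2.le
    rw [abs_of_nonneg h1]
    field_simp
  -- difference quotient inequality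
  have hineq : ∀ h : ℝ, h ∈ Set.Ioo 0 r →
      (Θ (r^2) - Θ ((r - h)^2)) / (2*ε*h) ≤ (uε (x - h • v) - uε x) / h := by
    intro h hh
    have hzne : (x - h • v) ≠ xe := by
      intro hcontra
      have := hznorm h hh
      rw [hcontra, sub_self, norm_zero] at this
      linarith [hh.2]
    have h1 := hkey (x - h • v) hzne
    rw [hznorm h hh] at h1
    have h2 : (Θ (r^2) - Θ ((r - h)^2)) / (2*ε) ≤ uε (x - h • v) - (u xe - Θ (r^2) / (2*ε)) := by
      have : (Θ (r^2) - Θ ((r - h)^2)) / (2*ε) = (u xe - Θ ((r-h)^2)/(2*ε)) - (u xe - Θ (r^2)/(2*ε)) := by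
        ring
      rw [this]
      linarith
    calc (Θ (r^2) - Θ ((r - h)^2)) / (2*ε*h) = ((Θ (r^2) - Θ ((r - h)^2)) / (2*ε)) / h := by
          ring
      _ ≤ (uε (x - h • v) - (u xe - Θ (r^2) / (2*ε))) / h := by
          exact div_le_div_of_nonneg_right h2 hh.1.le
      _ = (uε (x - h • v) - uε x) / h := by rw [hmax]
  -- the directional derivative of uε
  have hφ : HasDerivAt (fun h : ℝ => x - h • v) (-v) 0 := by
    have h1 : HasDerivAt (fun h : ℝ => h • v) v 0 := by
      simpa using (hasDerivAt_id (0:ℝ)).smul_const v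
    simpa using h1.const_sub x
  have hcomp : HasDerivAt (fun h : ℝ => uε (x - h • v)) (inner ℝ g (-v) : ℝ) 0 := by
    have hgf : HasFDerivAt uε ((InnerProductSpace.toDual ℝ (EuclideanSpace ℝ (Fin n))) g)
        (x - (0:ℝ) • v) := by simpa using hg.hasFDerivAt
    have := hgf.comp_hasDerivAt 0 hφ
    simpa [InnerProductSpace.toDual_apply_apply, Function.comp_def] using this
  have hF : Tendsto (fun h : ℝ => (uε (x - h • v) - uε x) / h) (nhdsWithin 0 (Set.Ioi 0))
      (nhds (inner ℝ g (-v) : ℝ)) := by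
    have := (hasDerivAt_iff_tendsto_slope.mp hcomp).mono_left
      (nhdsWithin_mono 0 (by intro a ha; exact ne_of_gt ha))
    refine this.congr' ?_
    filter_upwards [self_mem_nhdsWithin] with h hh
    simp [slope_def_field]
  -- the derivative of the Θ term
  have hΘdiff : HasDerivAt Θ (deriv Θ (r^2)) (r^2) := by
    have hmem : (r:ℝ)^2 ∈ Set.Ioi (0:ℝ) := Set.mem_Ioi.mpr (by positivity)
    have := (hΘC2.differentiableOn two_ne_zero).differentiableAt
      (isOpen_Ioi.mem_nhds hmem)
    exact this.hasDerivAt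
  have hψ : HasDerivAt (fun h : ℝ => Θ ((r - h)^2)) (deriv Θ (r^2) * (-(2*r))) 0 := by
    have hinner : HasDerivAt (fun h : ℝ => (r - h)^2) (-(2*r)) 0 := by
      have h1 : HasDerivAt (fun h : ℝ => r - h) (-1) 0 := by
        simpa using (hasDerivAt_id (0:ℝ)).const_sub r
      have := h1.fun_pow 2
      simpa using this
    have h2 : HasDerivAt Θ (deriv Θ (r^2)) ((r - (0:ℝ))^2) := by simpa using hΘdiff
    simpa [Function.comp_def] using h2.comp 0 hinner
  have hG : Tendsto (fun h : ℝ => (Θ (r^2) - Θ ((r - h)^2)) / (2*ε*h))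
      (nhdsWithin 0 (Set.Ioi 0)) (nhds ((1/ε) * (deriv Θ (r^2) * r))) := by
    have hslope := (hasDerivAt_iff_tendsto_slope.mp hψ).mono_left
      (nhdsWithin_mono 0 (show Set.Ioi (0:ℝ) ⊆ {0}ᶜ by intro a ha; exact ne_of_gt ha))
    have := hslope.const_mul (-(1/(2*ε)))
    have heq : Tendsto (fun h : ℝ => (Θ (r^2) - Θ ((r - h)^2)) / (2*ε*h))
        (nhdsWithin 0 (Set.Ioi 0))
        (nhds (-(1/(2*ε)) * (deriv Θ (r^2) * (-(2*r))))) := by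
      refine this.congr' ?_
      filter_upwards [self_mem_nhdsWithin] with h hh
      have hhne : h ≠ 0 := ne_of_gt hh
      simp only [slope_def_field]
      field_simp
      simp only [sub_zero]
      ring
    convert heq using 2
    field_simp
  -- pass to the limit
  have hlim : (1/ε) * (deriv Θ (r^2) * r) ≤ (inner ℝ g (-v) : ℝ) := by
    refine le_of_tendsto_of_tendsto hG hF ?_
    -- eventually h ∈ Ioo 0 r
    have hmem : Set.Ioo (0:ℝ) r ∈ nhdsWithin 0 (Set.Ioi 0) :=
      Ioo_mem_nhdsGT_of_mem ⟨le_refl 0, hrpos⟩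
    filter_upwards [hmem] with h hh
    exact hineq h hh
  have hfin : (inner ℝ g (-v) : ℝ) ≤ ‖g‖ := by
    calc (inner ℝ g (-v) : ℝ) ≤ ‖g‖ * ‖-v‖ := real_inner_le_norm g (-v)
      _ = ‖g‖ := by rw [norm_neg, hvnorm, mul_one]
  exact (hlim.trans hfin)
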